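/- arXiv:2601.04839 — 2 statements merged into one kernel-verified Lean document; each statement's English description precedes it below -/
import Mathlib

section
/- For a real symmetric d×d matrix V with eigenvalues λ_1,...,λ_d and the truncation λ_k⁺ = max{ε, min{λ_k, κ}}, the truncated matrix V⁺ = Q diag(λ_k⁺) Qᵀ is a nearest point to V in S_d^{ε,κ} with respect to the Frobenius norm: for every W ∈ S_d^{ε,κ}, ‖V − V⁺‖_F ≤ ‖V − W‖_F. -/
open Matrix

lemma trunc_trace_conj (d : ℕ) (Q B : Matrix (Fin d) (Fin d) ℝ) (hQ : Qᵀ * Q = 1) :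
    trace ((Q * B * Qᵀ)ᵀ * (Q * B * Qᵀ)) = trace (Bᵀ * B) := by
  have h1 : (Q * B * Qᵀ)ᵀ * (Q * B * Qᵀ) = Q * (Bᵀ * B) * Qᵀ := by
    simp only [Matrix.transpose_mul, Matrix.transpose_transpose, Matrix.mul_assoc]
    rw [← Matrix.mul_assoc Qᵀ Q, hQ, Matrix.one_mul]
  rw [h1, Matrix.trace_mul_comm, ← Matrix.mul_assoc, hQ, Matrix.one_mul]

lemma trunc_trace_sq (d : ℕ) (A : Matrix (Fin d) (Fin d) ℝ) :
    trace (Aᵀ * A) = ∑ i, ∑ j, (A j i)^2 := by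
  simp [Matrix.trace, Matrix.mul_apply, Matrix.diag, sq]

lemma trunc_clamp_sq_le (ε κ l t : ℝ) (hεκ : ε ≤ κ) (h1 : ε ≤ t) (h2 : t ≤ κ) :
    (l - max ε (min l κ))^2 ≤ (l - t)^2 := by
  rcases le_total l ε with h | h
  · rw [min_eq_left (le_trans h hεκ), max_eq_left h]
    nlinarith
  · rcases le_total l κ with h' | h'
    · rw [min_eq_left h', max_eq_right h]
      nlinarith
    · rw [min_eq_right h', max_eq_right hεκ]
      nlinarith

theorem truncation_is_nearest_point (d : ℕ) (ε κ : ℝ)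
    (hε : 0 ≤ ε) (hεκ : ε < κ)
    (V Q : Matrix (Fin d) (Fin d) ℝ) (lam : Fin d → ℝ)
    (hQ : Qᵀ * Q = 1)
    (hdecomp : V = Q * Matrix.diagonal lam * Qᵀ)
    (Vplus : Matrix (Fin d) (Fin d) ℝ)
    (hVplus : Vplus = Q * Matrix.diagonal (fun k => max ε (min (lam k) κ)) * Qᵀ) :
    ∀ W : Matrix (Fin d) (Fin d) ℝ, W.IsSymm →
      (∀ x : Fin d → ℝ,
        ε * (x ⬝ᵥ x) ≤ x ⬝ᵥ W.mulVec x ∧ x ⬝ᵥ W.mulVec x ≤ κ * (x ⬝ᵥ x)) →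
      Real.sqrt (Matrix.trace ((V - Vplus)ᵀ * (V - Vplus))) ≤
        Real.sqrt (Matrix.trace ((V - W)ᵀ * (V - W))) := by
  intro W _ hW
  have hQQT : Q * Qᵀ = 1 := mul_eq_one_comm.mp hQ
  set M := Qᵀ * W * Q with hM
  have hWdecomp : W = Q * M * Qᵀ := by
    rw [hM]
    calc W = (Q * Qᵀ) * W * (Q * Qᵀ) := by rw [hQQT]; simp
    _ = Q * (Qᵀ * W * Q) * Qᵀ := by simp only [Matrix.mul_assoc]
  have hMdiag : ∀ i, ε ≤ M i i ∧ M i i ≤ κ := by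
    intro i
    have hx := hW (fun j => Q j i)
    have hxx : (fun j => Q j i) ⬝ᵥ (fun j => Q j i) = (1 : Matrix (Fin d) (Fin d) ℝ) i i := by
      rw [← hQ]; simp [dotProduct, Matrix.mul_apply]
    have hxw : (fun j => Q j i) ⬝ᵥ W.mulVec (fun j => Q j i) = M i i := by
      rw [hM]
      simp only [dotProduct, Matrix.mulVec, Matrix.mul_apply, Matrix.transpose_apply,
        Finset.mul_sum, Finset.sum_mul, dotProduct]
      rw [Finset.sum_comm]
      exact Finset.sum_congr rfl fun j _ => Finset.sum_congr rfl fun k _ => by ring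
    rw [hxx, hxw] at hx
    simpa using hx
  have h1 : trace ((V - Vplus)ᵀ * (V - Vplus)) = ∑ i, (lam i - max ε (min (lam i) κ))^2 := by
    have heq : V - Vplus = Q * (Matrix.diagonal (fun k => lam k - max ε (min (lam k) κ))) * Qᵀ := by
      rw [hdecomp, hVplus, ← Matrix.sub_mul, ← Matrix.mul_sub]
      congr 2
      ext i j
      by_cases h : i = j <;> simp [Matrix.diagonal_apply, h]
    rw [heq, trunc_trace_conj d Q _ hQ, trunc_trace_sq]
    apply Finset.sum_congr rfl
    intro i _
    rw [Finset.sum_eq_single i]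
    · simp [Matrix.diagonal_apply]
    · intro j _ hj; simp [Matrix.diagonal_apply, hj]
    · simp
  have h2 : trace ((V - W)ᵀ * (V - W)) = ∑ i, ∑ j, ((Matrix.diagonal lam - M) j i)^2 := by
    have heq : V - W = Q * (Matrix.diagonal lam - M) * Qᵀ := by
      rw [hdecomp, hWdecomp, ← Matrix.sub_mul, ← Matrix.mul_sub]
    rw [heq, trunc_trace_conj d Q _ hQ, trunc_trace_sq]
  have key : ∑ i, (lam i - max ε (min (lam i) κ))^2 ≤ ∑ i, ∑ j, ((Matrix.diagonal lam - M) j i)^2 := by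
    apply Finset.sum_le_sum
    intro i _
    have hd : (lam i - max ε (min (lam i) κ))^2 ≤ ((Matrix.diagonal lam - M) i i)^2 := by
      have hdi : (Matrix.diagonal lam - M) i i = lam i - M i i := by
        simp [Matrix.diagonal_apply]
      rw [hdi]
      exact trunc_clamp_sq_le ε κ (lam i) (M i i) hεκ.le (hMdiag i).1 (hMdiag i).2
    exact le_trans hd (Finset.single_le_sum
      (f := fun j => ((Matrix.diagonal lam - M) j i)^2)
      (fun j _ => sq_nonneg _) (Finset.mem_univ i))
  rw [h1, h2]
  exact Real.sqrt_le_sqrt key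
end

section
/- If a bilinear form B on a finite-dimensional real inner product space H satisfies B(v,v) ≥ α‖v‖² for all v ∈ H with some α > 0 (and B is bilinear, hence continuous), and K ⊆ H is a nonempty closed convex set, then for every linear functional L on H there exists a unique u ∈ K such that B(u, v − u) ≥ L(v − u) for all v ∈ K. -/
open Real InnerProductSpace

private lemma exists_fixed_of_contraction' {X : Type*} [MetricSpace X] [Nonempty X]
    [CompleteSpace X] (T : X → X) (c : ℝ) (hc1 : c < 1)
    (hlip : ∀ u w, dist (T u) (T w) ≤ c * dist u w) : ∃ u, T u = u := by
  have hcontr : ContractingWith c.toNNReal T := by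
    constructor
    · exact_mod_cast Real.toNNReal_lt_one.mpr hc1
    · refine LipschitzWith.of_dist_le_mul (fun u w => ?_)
      rcases le_total c 0 with hc | hc
      · have h1 := hlip u w
        have h2 : c * dist u w ≤ 0 * dist u w :=
          mul_le_mul_of_nonneg_right hc dist_nonneg
        have h3 : dist (T u) (T w) = 0 := le_antisymm (by linarith) dist_nonneg
        rw [h3]
        positivity
      · rw [Real.coe_toNNReal _ hc]
        exact hlip u w
  exact ⟨ContractingWith.fixedPoint T hcontr, hcontr.fixedPoint_isFixedPt⟩

theorem stampacchia_finite_dim {H : Type*} [NormedAddCommGroup H]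
    [InnerProductSpace ℝ H] [FiniteDimensional ℝ H]
    (B : H →ₗ[ℝ] H →ₗ[ℝ] ℝ) (α : ℝ) (hα : 0 < α)
    (hcoer : ∀ v : H, α * ‖v‖ ^ 2 ≤ B v v)
    (K : Set H) (hne : K.Nonempty) (hcl : IsClosed K) (hconv : Convex ℝ K)
    (L : H →ₗ[ℝ] ℝ) :
    ∃! u : H, u ∈ K ∧ ∀ v ∈ K, L (v - u) ≤ B u (v - u) := by
  -- uniqueness
  have uniq : ∀ u₁ u₂ : H,
      (u₁ ∈ K ∧ ∀ v ∈ K, L (v - u₁) ≤ B u₁ (v - u₁)) →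
      (u₂ ∈ K ∧ ∀ v ∈ K, L (v - u₂) ≤ B u₂ (v - u₂)) → u₁ = u₂ := by
    rintro u₁ u₂ ⟨h₁, H₁⟩ ⟨h₂, H₂⟩
    have e₁ := H₁ u₂ h₂
    have e₂ := H₂ u₁ h₁
    have hc := hcoer (u₁ - u₂)
    have hB : B u₁ (u₂ - u₁) + B u₂ (u₁ - u₂) = - B (u₁ - u₂) (u₁ - u₂) := by
      simp only [map_sub, LinearMap.sub_apply]; ring
    have hL : L (u₂ - u₁) + L (u₁ - u₂) = 0 := by
      simp only [map_sub]; ring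
    have hn : ‖u₁ - u₂‖ ^ 2 ≤ 0 := by nlinarith
    have : ‖u₁ - u₂‖ = 0 := by nlinarith [norm_nonneg (u₁ - u₂)]
    exact sub_eq_zero.mp (norm_eq_zero.mp this)
  rcases subsingleton_or_nontrivial H with hsub | hnt
  · obtain ⟨u, hu⟩ := hne
    refine ⟨u, ⟨hu, fun v hv => ?_⟩, fun y hy => uniq y u hy ⟨hu, fun v hv => ?_⟩⟩ <;>
    · have : v - u = 0 := Subsingleton.elim _ _
      simp [this]
  -- setup: represent B and L with vectors
  haveI : CompleteSpace H := FiniteDimensional.complete ℝ H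
  have hAex : ∀ u : H, ∃ a : H, ∀ v : H, ⟪a, v⟫_ℝ = B u v := fun u =>
    ⟨(InnerProductSpace.toDual ℝ H).symm ((B u).toContinuousLinearMap),
      fun v => by
        rw [InnerProductSpace.toDual_symm_apply]
        simp⟩
  choose A hA using hAex
  have hA' : ∀ u v : H, ⟪v, A u⟫_ℝ = B u v := fun u v =>
    (real_inner_comm _ _).trans (hA u v)
  obtain ⟨f, hf⟩ : ∃ f : H, ∀ v : H, ⟪f, v⟫_ℝ = L v :=
    ⟨(InnerProductSpace.toDual ℝ H).symm (L.toContinuousLinearMap),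
      fun v => by rw [InnerProductSpace.toDual_symm_apply]; simp⟩
  -- A is linear
  have hAsub : ∀ u w : H, A u - A w = A (u - w) := by
    intro u w
    refine ext_inner_left ℝ (fun v => ?_)
    rw [inner_sub_right]
    simp only [hA']
    simp [map_sub, LinearMap.sub_apply]
  have hAsmul : ∀ (c : ℝ) (u : H), c • A u = A (c • u) := by
    intro c u
    refine ext_inner_left ℝ (fun v => ?_)
    rw [real_inner_smul_right]
    simp only [hA']
    simp [map_smul]
  have hAadd : ∀ u w : H, A u + A w = A (u + w) := by
    intro u w
    have h := hAsub (u + w) w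
    rw [add_sub_cancel_right] at h
    rw [← h]
    abel
  -- operator bound
  obtain ⟨M, hMpos, hAbd⟩ : ∃ M : ℝ, 0 < M ∧ ∀ v : H, ‖A v‖ ≤ M * ‖v‖ := by
    set Alin : H →ₗ[ℝ] H :=
      { toFun := A
        map_add' := fun u w => (hAadd u w).symm
        map_smul' := fun c u => (hAsmul c u).symm } with hAlin
    refine ⟨‖Alin.toContinuousLinearMap‖ + 1, by positivity, fun v => ?_⟩
    have h1 := Alin.toContinuousLinearMap.le_opNorm v
    have h2 : Alin.toContinuousLinearMap v = A v := rfl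
    rw [h2] at h1
    nlinarith [norm_nonneg v]
  have hAcoer : ∀ v : H, α * ‖v‖ ^ 2 ≤ ⟪A v, v⟫_ℝ := fun v => by
    rw [hA]; exact hcoer v
  -- α ≤ M
  have hαM : α ≤ M := by
    obtain ⟨v, hv⟩ := exists_ne (0 : H)
    have hvn : 0 < ‖v‖ := norm_pos_iff.mpr hv
    have h1 := hAcoer v
    have h2 : ⟪A v, v⟫_ℝ ≤ ‖A v‖ * ‖v‖ := real_inner_le_norm _ _
    have h3 := hAbd v
    have h4 : ‖A v‖ * ‖v‖ ≤ M * ‖v‖ * ‖v‖ :=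
      mul_le_mul_of_nonneg_right h3 hvn.le
    nlinarith [mul_pos hvn hvn]
  set ρ : ℝ := α / M ^ 2 with hρ
  have hρpos : 0 < ρ := by positivity
  set D : ℝ := 1 - α ^ 2 / M ^ 2 with hD
  have hDnn : 0 ≤ D := by
    rw [hD]
    have h : α ^ 2 ≤ M ^ 2 := by nlinarith
    have := div_le_one_of_le₀ h (by positivity : (0:ℝ) ≤ M ^ 2)
    linarith
  have hDlt : D < 1 := by
    rw [hD]
    have : 0 < α ^ 2 / M ^ 2 := by positivity
    linarith
  have hDeq : D = 1 - 2 * ρ * α + ρ ^ 2 * M ^ 2 := by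
    rw [hD, hρ]; field_simp; ring
  -- key contraction estimate
  have key : ∀ v : H, ‖v - ρ • A v‖ ^ 2 ≤ D * ‖v‖ ^ 2 := by
    intro v
    have h1 : ‖v - ρ • A v‖ ^ 2 = ‖v‖ ^ 2 - 2 * ⟪v, ρ • A v⟫_ℝ + ‖ρ • A v‖ ^ 2 :=
      norm_sub_sq_real v (ρ • A v)
    have h2 : ⟪v, ρ • A v⟫_ℝ = ρ * ⟪A v, v⟫_ℝ := by
      rw [real_inner_smul_right, real_inner_comm]
    have h3 : ‖ρ • A v‖ ^ 2 = ρ ^ 2 * ‖A v‖ ^ 2 := by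
      rw [norm_smul]
      simp [abs_of_pos hρpos, mul_pow]
    have h4 : ‖A v‖ ^ 2 ≤ (M * ‖v‖) ^ 2 := by
      nlinarith [norm_nonneg (A v), hAbd v, norm_nonneg v, hMpos]
    have h5 := hAcoer v
    rw [h1, h2, h3, hDeq]
    nlinarith [sq_nonneg ρ]
  -- projection onto K
  have hPex : ∀ z : H, ∃ p : H, p ∈ K ∧ ∀ w ∈ K, ⟪z - p, w - p⟫_ℝ ≤ 0 := by
    intro z
    obtain ⟨p, hpK, hp⟩ :=
      exists_norm_eq_iInf_of_complete_convex hne hcl.isComplete hconv z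
    exact ⟨p, hpK, (norm_eq_iInf_iff_real_inner_le_zero hconv hpK).mp hp⟩
  choose P hPmem hPle using hPex
  have Pnonexp : ∀ z₁ z₂ : H, ‖P z₁ - P z₂‖ ≤ ‖z₁ - z₂‖ := by
    intro z₁ z₂
    have hp := hPle z₁ (P z₂) (hPmem z₂)
    have hq := hPle z₂ (P z₁) (hPmem z₁)
    have hcs : ⟪z₁ - z₂, P z₁ - P z₂⟫_ℝ ≤ ‖z₁ - z₂‖ * ‖P z₁ - P z₂‖ :=
      real_inner_le_norm _ _
    have hsq : ‖P z₁ - P z₂‖ ^ 2 = ⟪P z₁ - P z₂, P z₁ - P z₂⟫_ℝ :=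
      (real_inner_self_eq_norm_sq _).symm
    have hexp : ⟪P z₁ - P z₂, P z₁ - P z₂⟫_ℝ
        = ⟪z₁ - P z₁, P z₂ - P z₁⟫_ℝ + ⟪z₂ - P z₂, P z₁ - P z₂⟫_ℝ
          + ⟪z₁ - z₂, P z₁ - P z₂⟫_ℝ := by
      simp only [inner_sub_left, inner_sub_right]
      ring
    by_contra hcon
    push_neg at hcon
    have hpos : 0 < ‖P z₁ - P z₂‖ := lt_of_le_of_lt (norm_nonneg _) hcon
    have hmul : ‖z₁ - z₂‖ * ‖P z₁ - P z₂‖ < ‖P z₁ - P z₂‖ * ‖P z₁ - P z₂‖ :=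
      mul_lt_mul_of_pos_right hcon hpos
    nlinarith
  -- the contraction on K
  haveI : Nonempty K := hne.to_subtype
  haveI : CompleteSpace K := hcl.completeSpace_coe
  obtain ⟨u, hfix⟩ := exists_fixed_of_contraction'
    (fun u : K => (⟨P ((u : H) - ρ • (A u - f)), hPmem _⟩ : K))
    (Real.sqrt D)
    (by rw [show (1 : ℝ) = Real.sqrt 1 by simp]; exact Real.sqrt_lt_sqrt hDnn hDlt)
    (by
      intro u w
      rw [Subtype.dist_eq, Subtype.dist_eq, dist_eq_norm, dist_eq_norm]
      have h1 : ‖P ((u : H) - ρ • (A u - f)) - P ((w : H) - ρ • (A w - f))‖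
          ≤ ‖((u : H) - ρ • (A u - f)) - ((w : H) - ρ • (A w - f))‖ :=
        Pnonexp _ _
      have h2 : ((u : H) - ρ • (A u - f)) - ((w : H) - ρ • (A w - f))
          = ((u : H) - w) - ρ • A ((u : H) - w) := by
        rw [← hAsub]
        simp only [smul_sub]
        abel
      have h3 := key ((u : H) - w)
      have h4 : ‖((u : H) - w) - ρ • A ((u : H) - w)‖
          ≤ Real.sqrt D * ‖(u : H) - w‖ := by
        have h5 := Real.sqrt_le_sqrt h3
        rwa [Real.sqrt_sq (norm_nonneg _), Real.sqrt_mul hDnn,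
          Real.sqrt_sq (norm_nonneg _)] at h5
      calc ‖P ((u : H) - ρ • (A u - f)) - P ((w : H) - ρ • (A w - f))‖
          ≤ ‖((u : H) - ρ • (A u - f)) - ((w : H) - ρ • (A w - f))‖ := h1
        _ = ‖((u : H) - w) - ρ • A ((u : H) - w)‖ := by rw [h2]
        _ ≤ Real.sqrt D * ‖(u : H) - w‖ := h4)
  -- u solves the variational inequality
  have h2 : P ((u : H) - ρ • (A u - f)) = (u : H) := congrArg Subtype.val hfix
  have hsol : ∀ v ∈ K, L (v - (u : H)) ≤ B (u : H) (v - (u : H)) := by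
    intro v hv
    have h1 := hPle ((u : H) - ρ • (A u - f)) v hv
    rw [h2] at h1
    have h3 : ((u : H) - ρ • (A u - f)) - u = -(ρ • (A u - f)) := by abel
    rw [h3] at h1
    have h4 : ⟪-(ρ • (A (u : H) - f)), v - u⟫_ℝ
        = -(ρ * (⟪A (u : H), v - u⟫_ℝ - ⟪f, v - u⟫_ℝ)) := by
      rw [inner_neg_left, real_inner_smul_left, inner_sub_left]
    rw [h4] at h1
    have h5 : 0 ≤ ⟪A (u : H), v - u⟫_ℝ - ⟪f, v - u⟫_ℝ := by
      by_contra hcon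
      push_neg at hcon
      nlinarith
    rw [hA, hf] at h5
    linarith
  exact ⟨u, ⟨u.2, hsol⟩, fun y hy => uniq y u hy ⟨u.2, hsol⟩⟩
end
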